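/- For every integer k ≥ 0, setting μ = 20 + 2k, the following inequality of rational numbers holds: (31/36 − 3/2)² + (37/36 − 3/2)² + (43/36 − 3/2)² + (47/36 − 3/2)² + (49/36 − 3/2)² + (53/36 − 3/2)² + (55/36 − 3/2)² + (59/36 − 3/2)² + (61/36 − 3/2)² + (65/36 − 3/2)² + (71/36 − 3/2)² + (77/36 − 3/2)² + ∑_{l=1}^{2k+8} ((l + 2k + 9)/(2k+9) − 3/2)² ≤ (μ/12)·(77/36 − 31/36). -/
import Mathlib

lemma sum_aux (d : ℚ) : ∀ n : ℕ, ∑ l ∈ Finset.Icc 1 n, ((l : ℚ) / d - 1/2) ^ 2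
    = (n : ℚ) * (n + 1) * (2 * n + 1) / 6 * d⁻¹ ^ 2 - (n : ℚ) * (n + 1) / 2 * d⁻¹ + (n : ℚ) / 4 := by
  intro n
  induction n with
  | zero => simp
  | succ m ih =>
    rw [Finset.sum_Icc_succ_top (by omega), ih]
    push_cast
    ring

theorem stmt_15 (k : ℕ) :
    ((31/36 : ℚ) - 3/2) ^ 2 +
      ((37/36 : ℚ) - 3/2) ^ 2 +
      ((43/36 : ℚ) - 3/2) ^ 2 +
      ((47/36 : ℚ) - 3/2) ^ 2 +
      ((49/36 : ℚ) - 3/2) ^ 2 +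
      ((53/36 : ℚ) - 3/2) ^ 2 +
      ((55/36 : ℚ) - 3/2) ^ 2 +
      ((59/36 : ℚ) - 3/2) ^ 2 +
      ((61/36 : ℚ) - 3/2) ^ 2 +
      ((65/36 : ℚ) - 3/2) ^ 2 +
      ((71/36 : ℚ) - 3/2) ^ 2 +
      ((77/36 : ℚ) - 3/2) ^ 2 +
      ∑ l ∈ Finset.Icc 1 (2 * k + 8), (((l : ℚ) + 2 * (k : ℚ) + 9) / (2 * (k : ℚ) + 9) - 3/2) ^ 2
    ≤ ((20 + 2 * (k : ℚ)) / 12) * (77/36 - 31/36) := by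
  have hd : (0:ℚ) < 2 * (k : ℚ) + 9 := by positivity
  have h1 : ∑ l ∈ Finset.Icc 1 (2 * k + 8),
      (((l : ℚ) + 2 * (k : ℚ) + 9) / (2 * (k : ℚ) + 9) - 3/2) ^ 2
      = ∑ l ∈ Finset.Icc 1 (2 * k + 8), ((l : ℚ) / (2 * (k : ℚ) + 9) - 1/2) ^ 2 := by
    refine Finset.sum_congr rfl fun l _ => ?_
    congr 1
    field_simp
    ring
  rw [h1, sum_aux]
  have hk : (0 : ℚ) ≤ (k : ℚ) := Nat.cast_nonneg k
  have hd' : (2 * (k : ℚ) + 9) ≠ 0 := ne_of_gt hd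
  push_cast
  have key : ((20 + 2 * (k:ℚ)) / 12) * (77/36 - 31/36)
      - (((31/36 : ℚ) - 3/2) ^ 2 + ((37/36 : ℚ) - 3/2) ^ 2 + ((43/36 : ℚ) - 3/2) ^ 2
        + ((47/36 : ℚ) - 3/2) ^ 2 + ((49/36 : ℚ) - 3/2) ^ 2 + ((53/36 : ℚ) - 3/2) ^ 2
        + ((55/36 : ℚ) - 3/2) ^ 2 + ((59/36 : ℚ) - 3/2) ^ 2 + ((61/36 : ℚ) - 3/2) ^ 2
        + ((65/36 : ℚ) - 3/2) ^ 2 + ((71/36 : ℚ) - 3/2) ^ 2 + ((77/36 : ℚ) - 3/2) ^ 2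
        + ((2 * (k:ℚ) + 8) * (2 * (k:ℚ) + 8 + 1) * (2 * (2 * (k:ℚ) + 8) + 1) / 6 * (2 * (k:ℚ) + 9)⁻¹ ^ 2
          - (2 * (k:ℚ) + 8) * (2 * (k:ℚ) + 8 + 1) / 2 * (2 * (k:ℚ) + 9)⁻¹ + (2 * (k:ℚ) + 8) / 4))
      = ((5/27) * (k:ℚ)^3 + (52/27) * (k:ℚ)^2 + (23/4) * (k:ℚ) + 15/4) / (2 * (k:ℚ) + 9) ^ 2 := by
    field_simp
    ring
  have hnum : (0:ℚ) ≤ ((5/27) * (k:ℚ)^3 + (52/27) * (k:ℚ)^2 + (23/4) * (k:ℚ) + 15/4) / (2 * (k:ℚ) + 9) ^ 2 := by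
    positivity
  linarith [key, hnum]
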